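/- If the sequence (r_k) satisfies r_k ≤ r_{k−1}/(2 Q_{2^k − 1}) where Q_n = max_{t≥0} p_n(K₀ t) e^{−γ t}, and the solution x(t) of x' = F(x) satisfies r_{k+1} ≤ |x(0)| < r_k for some k ≥ 3, then |x(t)| < r_{k−1} for all t ≥ 0; in particular x = 0 is Lyapunov stable. -/

import Mathlib

open scoped BigOperators
noncomputable section

/-- The Hilbert space ℓ². -/
abbrev H : Type := lp (fun _ : ℕ => ℂ) 2

/-- if the sequence $(r_k)$ satisfies $r_k ≤ r_{k-1}/(2Q_{2^k-1})$, where
$Q_n = \max_{t≥0} p_n(K₀t)e^{-γt}$, and (key lemma, supplied as a hypothesis) whenever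
$r_{k+2} ≤ |x(t)| ≤ r_{k-1}$ on an interval $[s₀,s₁]$ one has
$|x(t)| ≤ p_{2^k-1}(K₀(t-s₀))e^{-γ(t-s₀)}|x(s₀)|$ there, then any solution of
$x' = F(x)$ with $r_{k+1} ≤ |x(0)| < r_k$ ($k ≥ 3$) satisfies $|x(t)| < r_{k-1}$ for all
$t ≥ 0$; in particular $x = 0$ is Lyapunov stable. -/
theorem stmt19 (γ K₀ : ℝ) (hγ : 0 < γ) (hK₀ : 0 < K₀)
    (r : ℕ → ℝ) (hrpos : ∀ k, 0 < r k) (hranti : StrictAnti r)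
    (hr2 : ∀ k, r (k + 1) ≤ r k / 2)
    (Q : ℕ → ℝ)
    (hQ : ∀ n : ℕ, IsGreatest
      ((fun t : ℝ =>
        (∑ j ∈ Finset.range (n + 1), (K₀ * t) ^ j / (j.factorial : ℝ)) *
          Real.exp (-γ * t)) '' Set.Ici 0) (Q n))
    (hr : ∀ k : ℕ, 2 ≤ k → r k ≤ r (k - 1) / (2 * Q (2 ^ k - 1)))
    (F : H → H)
    (hlem : ∀ x : ℝ → H, (∀ t : ℝ, HasDerivAt x (F (x t)) t) →
      ∀ k : ℕ, 3 ≤ k → ∀ s₀ s₁ : ℝ, 0 ≤ s₀ → s₀ ≤ s₁ →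
        (∀ t ∈ Set.Icc s₀ s₁, r (k + 2) ≤ ‖x t‖ ∧ ‖x t‖ ≤ r (k - 1)) →
        ∀ t ∈ Set.Icc s₀ s₁,
          ‖x t‖ ≤ (∑ j ∈ Finset.range (2 ^ k), (K₀ * (t - s₀)) ^ j / (j.factorial : ℝ)) *
            Real.exp (-γ * (t - s₀)) * ‖x s₀‖) :
    (∀ x : ℝ → H, (∀ t : ℝ, HasDerivAt x (F (x t)) t) →
      ∀ k : ℕ, 3 ≤ k → r (k + 1) ≤ ‖x 0‖ → ‖x 0‖ < r k →
        ∀ t : ℝ, 0 ≤ t → ‖x t‖ < r (k - 1)) ∧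
    (∀ ε : ℝ, 0 < ε → ∃ δ : ℝ, 0 < δ ∧
      ∀ x : ℝ → H, (∀ t : ℝ, HasDerivAt x (F (x t)) t) → ‖x 0‖ < δ →
        ∀ t : ℝ, 0 ≤ t → ‖x t‖ < ε) := by
  -- Basic facts about Q
  have hQ1 : ∀ n : ℕ, 1 ≤ Q n := by
    intro n
    have h0 : (∑ j ∈ Finset.range (n + 1), (K₀ * (0:ℝ)) ^ j / (j.factorial : ℝ)) *
        Real.exp (-γ * 0) = 1 := by
      rw [mul_zero, mul_zero, Real.exp_zero, mul_one, Finset.sum_range_succ']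
      simp
    have h1 := (hQ n).2 ⟨0, Set.self_mem_Ici, rfl⟩
    exact le_of_eq_of_le h0.symm h1
  have hQpos : ∀ n, (0:ℝ) < Q n := fun n => lt_of_lt_of_le one_pos (hQ1 n)
  have hQub : ∀ n : ℕ, ∀ t : ℝ, 0 ≤ t →
      (∑ j ∈ Finset.range (n + 1), (K₀ * t) ^ j / (j.factorial : ℝ)) * Real.exp (-γ * t) ≤ Q n :=
    fun n t ht => (hQ n).2 ⟨t, ht, rfl⟩
  have hQrk : ∀ k : ℕ, 2 ≤ k → Q (2 ^ k - 1) * r k ≤ r (k - 1) / 2 := by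
    intro k hk
    have hQp := hQpos (2 ^ k - 1)
    have hne : Q (2 ^ k - 1) ≠ 0 := ne_of_gt hQp
    calc Q (2 ^ k - 1) * r k
        ≤ Q (2 ^ k - 1) * (r (k - 1) / (2 * Q (2 ^ k - 1))) :=
          mul_le_mul_of_nonneg_left (hr k hk) (le_of_lt hQp)
      _ = r (k - 1) / 2 := by field_simp
  -- Key claim
  have key : ∀ x : ℝ → H, (∀ t : ℝ, HasDerivAt x (F (x t)) t) →
      ∀ k : ℕ, 3 ≤ k → ‖x 0‖ < r k → ∀ t : ℝ, 0 ≤ t → ‖x t‖ < r (k - 1) := by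
    intro x hx k hk3 h0 t₁ ht₁
    by_contra hcon
    push_neg at hcon
    have hc : Continuous fun t => ‖x t‖ :=
      (continuous_iff_continuousAt.2 fun t => (hx t).continuousAt).norm
    set A : Set ℝ := Set.Ici 0 ∩ (fun t => ‖x t‖) ⁻¹' Set.Ici (r (k - 1)) with hAdef
    have hAne : A.Nonempty := ⟨t₁, ht₁, hcon⟩
    have hAclosed : IsClosed A := isClosed_Ici.inter (isClosed_Ici.preimage hc)
    have hAbdd : BddBelow A := ⟨0, fun s hs => hs.1⟩
    set T := sInf A with hTdef
    have hTA : T ∈ A := hAclosed.csInf_mem hAne hAbdd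
    have hT0 : 0 ≤ T := hTA.1
    have hTub : r (k - 1) ≤ ‖x T‖ := hTA.2
    have hkk1 : r k < r (k - 1) := hranti (by omega)
    have hTpos : 0 < T := by
      rcases lt_or_eq_of_le hT0 with h | h
      · exact h
      · exfalso; rw [← h] at hTub; linarith
    have hlt : ∀ s, 0 ≤ s → s < T → ‖x s‖ < r (k - 1) := by
      intro s hs hsT
      by_contra h
      push_neg at h
      exact absurd (csInf_le hAbdd ⟨hs, h⟩) (not_le.2 hsT)
    have hle : ∀ s ∈ Set.Icc (0:ℝ) T, ‖x s‖ ≤ r (k - 1) := by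
      intro s hs
      rcases eq_or_lt_of_le hs.2 with h | h
      · rw [h]
        have hev : ∀ᶠ u in nhdsWithin T (Set.Iio T), ‖x u‖ ≤ r (k - 1) := by
          filter_upwards [Ioo_mem_nhdsLT_of_mem (Set.mem_Ioc.2 ⟨hTpos, le_refl T⟩)] with u hu
          exact le_of_lt (hlt u (le_of_lt hu.1) hu.2)
        exact le_of_tendsto ((hc.tendsto T).mono_left nhdsWithin_le_nhds) hev
      · exact le_of_lt (hlt s hs.1 h)
    have hmain : ∃ s₀, s₀ ∈ Set.Icc (0:ℝ) T ∧ ‖x s₀‖ ≤ r k ∧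
        ∀ t ∈ Set.Icc s₀ T, r (k + 2) ≤ ‖x t‖ ∧ ‖x t‖ ≤ r (k - 1) := by
      by_cases hB : ∃ s ∈ Set.Icc (0:ℝ) T, ‖x s‖ ≤ r (k + 2)
      · set B : Set ℝ := Set.Icc (0:ℝ) T ∩ (fun t => ‖x t‖) ⁻¹' Set.Iic (r (k + 2)) with hBdef
        have hBne : B.Nonempty := by
          obtain ⟨s, hs1, hs2⟩ := hB; exact ⟨s, hs1, hs2⟩
        have hBclosed : IsClosed B := isClosed_Icc.inter (isClosed_Iic.preimage hc)
        have hBbdd : BddAbove B := ⟨T, fun s hs => hs.1.2⟩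
        set s₀ := sSup B with hs₀def
        have hs₀B : s₀ ∈ B := hBclosed.csSup_mem hBne hBbdd
        have hs₀T : s₀ ≤ T := hs₀B.1.2
        have hs₀0 : 0 ≤ s₀ := hs₀B.1.1
        have hgt : ∀ t, s₀ < t → t ≤ T → r (k + 2) < ‖x t‖ := by
          intro t hst htT
          by_contra h
          push_neg at h
          have htB : t ∈ B := ⟨⟨hs₀0.trans (le_of_lt hst), htT⟩, h⟩
          exact absurd (le_csSup hBbdd htB) (not_le.2 hst)
        have hk2k1 : r (k + 2) < r (k - 1) := hranti (by omega)
        have hs₀lt : s₀ < T := by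
          rcases lt_or_eq_of_le hs₀T with h | h
          · exact h
          · exfalso
            have h2 : ‖x s₀‖ ≤ r (k + 2) := hs₀B.2
            rw [h] at h2
            linarith
        have hs₀ge : r (k + 2) ≤ ‖x s₀‖ := by
          have hev : ∀ᶠ u in nhdsWithin s₀ (Set.Ioi s₀), r (k + 2) ≤ ‖x u‖ := by
            filter_upwards [Ioc_mem_nhdsGT_of_mem (Set.mem_Ico.2 ⟨le_refl s₀, hs₀lt⟩)] with u hu
            exact le_of_lt (hgt u hu.1 hu.2)
          exact ge_of_tendsto ((hc.tendsto s₀).mono_left nhdsWithin_le_nhds) hev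
        refine ⟨s₀, hs₀B.1, hs₀B.2.trans (le_of_lt (hranti (by omega))), ?_⟩
        intro t ht
        refine ⟨?_, hle t ⟨hs₀0.trans ht.1, ht.2⟩⟩
        rcases eq_or_lt_of_le ht.1 with h | h
        · rw [← h]; exact hs₀ge
        · exact le_of_lt (hgt t h ht.2)
      · push_neg at hB
        exact ⟨0, ⟨le_refl 0, hT0⟩, le_of_lt h0,
          fun t ht => ⟨le_of_lt (hB t ht), hle t ht⟩⟩
    obtain ⟨s₀, hs₀mem, hs₀k, hbounds⟩ := hmain
    have happ := hlem x hx k hk3 s₀ T hs₀mem.1 hs₀mem.2 hbounds T ⟨hs₀mem.2, le_refl T⟩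
    have hrange : (2 : ℕ) ^ k = (2 ^ k - 1) + 1 := (Nat.sub_add_cancel Nat.one_le_two_pow).symm
    rw [hrange] at happ
    have hTs : 0 ≤ T - s₀ := sub_nonneg.2 hs₀mem.2
    have hp := hQub (2 ^ k - 1) (T - s₀) hTs
    have hQn := hQpos (2 ^ k - 1)
    have h1 : ‖x T‖ ≤ Q (2 ^ k - 1) * ‖x s₀‖ :=
      happ.trans (mul_le_mul_of_nonneg_right hp (norm_nonneg _))
    have h2 : Q (2 ^ k - 1) * ‖x s₀‖ ≤ Q (2 ^ k - 1) * r k :=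
      mul_le_mul_of_nonneg_left hs₀k (le_of_lt hQn)
    have h3 := hQrk k (by omega)
    linarith [hrpos (k - 1)]
  refine ⟨fun x hx k hk3 _ h2 t ht => key x hx k hk3 h2 t ht, ?_⟩
  intro ε hε
  have hdecay : ∀ n : ℕ, r (n + 2) ≤ r 2 * (1 / 2) ^ n := by
    intro n
    induction n with
    | zero => simp
    | succ n ih =>
      have h := hr2 (n + 2)
      calc r (n + 3) ≤ r (n + 2) / 2 := h
        _ ≤ (r 2 * (1 / 2) ^ n) / 2 := by linarith
        _ = r 2 * (1 / 2) ^ (n + 1) := by ring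
  obtain ⟨n, hn⟩ := exists_pow_lt_of_lt_one (div_pos hε (hrpos 2)) (by norm_num : (1/2:ℝ) < 1)
  rw [lt_div_iff₀ (hrpos 2), mul_comm] at hn
  have hrn : r (n + 2) < ε := lt_of_le_of_lt (hdecay n) hn
  refine ⟨r (n + 3), hrpos _, fun x hx hx0 t ht => ?_⟩
  have h := key x hx (n + 3) (by omega) hx0 t ht
  have he : n + 3 - 1 = n + 2 := by omega
  rw [he] at h
  linarith
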